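/- arXiv:math/0409087 — 2 statements merged into one kernel-verified Lean document; each statement's English description precedes it below -/
import Mathlib

section
/- The commutator [xᵐ, yⁿ] is a product of two squares in the free group F₂ = ⟨x,y⟩ if and only if mn is even. -/
open scoped commutatorElement

/-- The free group on two generators. -/
abbrev F2 : Type := FreeGroup Bool

/-- The first generator. -/
def x : F2 := FreeGroup.of true
/-- The second generator. -/
def y : F2 := FreeGroup.of false

/-! Auxiliary: the Heisenberg group over `ZMod 4`. -/

@[ext] structure Heis where
  a : ZMod 4
  b : ZMod 4
  c : ZMod 4

namespace Heis

instance : Mul Heis := ⟨fun g h => ⟨g.a + h.a, g.b + h.b, g.c + h.c + g.a * h.b⟩⟩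
instance : One Heis := ⟨⟨0, 0, 0⟩⟩
instance : Inv Heis := ⟨fun g => ⟨-g.a, -g.b, -g.c + g.a * g.b⟩⟩

@[simp] lemma mul_def (g h : Heis) :
    g * h = ⟨g.a + h.a, g.b + h.b, g.c + h.c + g.a * h.b⟩ := rfl
@[simp] lemma one_def : (1 : Heis) = ⟨0, 0, 0⟩ := rfl
@[simp] lemma inv_def (g : Heis) : g⁻¹ = ⟨-g.a, -g.b, -g.c + g.a * g.b⟩ := rfl

instance : Group Heis where
  mul_assoc g h k := by ext <;> simp <;> ring
  one_mul g := by ext <;> simp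
  mul_one g := by ext <;> simp
  inv_mul_cancel g := by ext <;> simp

/-- First coordinate, as a multiplicative homomorphism. -/
def q1 : Heis →* Multiplicative (ZMod 4) where
  toFun g := Multiplicative.ofAdd g.a
  map_one' := rfl
  map_mul' g h := rfl

/-- Second coordinate, as a multiplicative homomorphism. -/
def q2 : Heis →* Multiplicative (ZMod 4) where
  toFun g := Multiplicative.ofAdd g.b
  map_one' := rfl
  map_mul' g h := rfl

lemma comm_eq (g h : Heis) (hg : g.b = 0) (hh : h.a = 0) :
    ⁅g, h⁆ = ⟨0, 0, g.a * h.b⟩ := by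
  obtain ⟨p, q, r⟩ := g
  obtain ⟨s, t, u⟩ := h
  simp only at hg hh
  subst hg hh
  rw [commutatorElement_def]
  ext <;> simp <;> ring

end Heis

/-- The homomorphism `F₂ → Heis`. -/
noncomputable def φ : F2 →* Heis :=
  FreeGroup.lift (fun t => if t then ⟨1, 0, 0⟩ else ⟨0, 1, 0⟩)

@[simp] lemma φ_x : φ x = ⟨1, 0, 0⟩ := by simp [φ, x]
@[simp] lemma φ_y : φ y = ⟨0, 1, 0⟩ := by simp [φ, y]

lemma φ_x_pow_a (m : ℤ) : (φ x ^ m).a = (m : ZMod 4) := by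
  have h : Heis.q1 (φ x ^ m) = Heis.q1 (φ x) ^ m := map_zpow _ _ _
  have : Multiplicative.toAdd (Heis.q1 (φ x ^ m)) =
      m • Multiplicative.toAdd (Heis.q1 (φ x)) := by
    rw [h, toAdd_zpow]
  simpa [Heis.q1] using this

lemma φ_x_pow_b (m : ℤ) : (φ x ^ m).b = 0 := by
  have h : Heis.q2 (φ x ^ m) = Heis.q2 (φ x) ^ m := map_zpow _ _ _
  have : Multiplicative.toAdd (Heis.q2 (φ x ^ m)) =
      m • Multiplicative.toAdd (Heis.q2 (φ x)) := by
    rw [h, toAdd_zpow]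
  simpa [Heis.q2] using this

lemma φ_y_pow_a (n : ℤ) : (φ y ^ n).a = 0 := by
  have h : Heis.q1 (φ y ^ n) = Heis.q1 (φ y) ^ n := map_zpow _ _ _
  have : Multiplicative.toAdd (Heis.q1 (φ y ^ n)) =
      n • Multiplicative.toAdd (Heis.q1 (φ y)) := by
    rw [h, toAdd_zpow]
  simpa [Heis.q1] using this

lemma φ_y_pow_b (n : ℤ) : (φ y ^ n).b = (n : ZMod 4) := by
  have h : Heis.q2 (φ y ^ n) = Heis.q2 (φ y) ^ n := map_zpow _ _ _
  have : Multiplicative.toAdd (Heis.q2 (φ y ^ n)) =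
      n • Multiplicative.toAdd (Heis.q2 (φ y)) := by
    rw [h, toAdd_zpow]
  simpa [Heis.q2] using this

/-- Key finite check in `ZMod 4`. -/
lemma key (p q r s t u : ZMod 4)
    (h1 : p + p + (s + s) = 0) (h2 : q + q + (t + t) = 0) :
    r + r + p * q + (u + u + s * t) + (p + p) * (t + t) = 0 ∨
    r + r + p * q + (u + u + s * t) + (p + p) * (t + t) = 2 := by
  revert h1 h2; revert p q r s t u; decide

/-- `⁅xᵐ, yⁿ⁆` is a product of two squares in the free group `F₂ = ⟨x,y⟩` iff `m*n` is even. -/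
theorem commutator_pow_prod_two_squares_iff (m n : ℤ) :
    (∃ a b : F2, ⁅x ^ m, y ^ n⁆ = a ^ 2 * b ^ 2) ↔ Even (m * n) := by
  constructor
  · rintro ⟨a, b, hab⟩
    have h := congrArg φ hab
    rw [map_commutatorElement, map_mul, map_pow, map_pow, map_zpow, map_zpow] at h
    rw [Heis.comm_eq (φ x ^ m) (φ y ^ n) (φ_x_pow_b m) (φ_y_pow_a n),
        φ_x_pow_a, φ_y_pow_b] at h
    have hc : (((m * n : ℤ)) : ZMod 4) = 0 ∨ (((m * n : ℤ)) : ZMod 4) = 2 := by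
      have h1 := congrArg Heis.a h
      have h2 := congrArg Heis.b h
      have h3 := congrArg Heis.c h
      simp [pow_two] at h1 h2 h3
      push_cast
      rw [h3]
      exact key _ _ _ _ _ _ h1.symm h2.symm
    rcases hc with h0 | h2
    · obtain ⟨k, hk⟩ := (ZMod.intCast_zmod_eq_zero_iff_dvd _ _).mp h0
      exact ⟨2 * k, by omega⟩
    · obtain ⟨k, hk⟩ : (4 : ℤ) ∣ (m * n - 2) := by
        refine (ZMod.intCast_zmod_eq_zero_iff_dvd _ _).mp ?_
        push_cast at h2 ⊢
        rw [h2]; ring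
      exact ⟨2 * k + 1, by omega⟩
  · intro hmn
    rcases Int.even_mul.mp hmn with hm | hn
    · obtain ⟨k, hk⟩ := hm
      refine ⟨x ^ k, y ^ n * x ^ (-k) * (y ^ n)⁻¹, ?_⟩
      subst hk
      rw [commutatorElement_def, pow_two, pow_two]
      group
    · obtain ⟨k, hk⟩ := hn
      refine ⟨x ^ m * y ^ k * (x ^ m)⁻¹, y ^ (-k), ?_⟩
      subst hk
      rw [commutatorElement_def, pow_two, pow_two]
      group
end

section
/- There is an element g in [F₂,F₂] (namely one whose homology class in the universal abelian cover is (x−1)(y−1) times the class of [x,y]) for which f_γ(y) := P_γ(1,y) = 0 and g_γ(x) := Q_γ(x,1) = 0 identically; hence all the homomorphisms φⱼ and ψⱼ vanish on g. -/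
/-- The Laurent polynomial ring `ℤ[x^{±1}, y^{±1}]`, as the group algebra `ℤ[ℤ²]`. -/
abbrev R2 : Type := AddMonoidAlgebra ℤ (ℤ × ℤ)

/-- The monomial `x^{a.1} y^{a.2}`. -/
noncomputable def mono (a : ℤ × ℤ) : R2 := AddMonoidAlgebra.single a 1

/-- The variable `x`. -/
noncomputable def X : R2 := mono (1, 0)
/-- The variable `y`. -/
noncomputable def Y : R2 := mono (0, 1)

lemma mono_add (a b : ℤ × ℤ) : mono (a + b) = mono a * mono b := by
  simp [mono, AddMonoidAlgebra.single_mul_single]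

lemma mono_zero : mono 0 = 1 := rfl

/-- Data of the lift of a loop to the universal abelian cover of the wedge of two
circles: the endpoint (= abelianized image) together with the 1-chain `P·X + Q·Y`
(the coefficients are the abelianized Fox derivatives). -/
structure FoxData where
  ab : ℤ × ℤ
  P : R2
  Q : R2

noncomputable instance : Mul FoxData :=
  ⟨fun u v => ⟨u.ab + v.ab, u.P + mono u.ab * v.P, u.Q + mono u.ab * v.Q⟩⟩
noncomputable instance : One FoxData := ⟨⟨0, 0, 0⟩⟩
noncomputable instance : Inv FoxData :=
  ⟨fun u => ⟨-u.ab, -(mono (-u.ab) * u.P), -(mono (-u.ab) * u.Q)⟩⟩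

@[simp] lemma mul_ab (u v : FoxData) : (u * v).ab = u.ab + v.ab := rfl
@[simp] lemma mul_P (u v : FoxData) : (u * v).P = u.P + mono u.ab * v.P := rfl
@[simp] lemma mul_Q (u v : FoxData) : (u * v).Q = u.Q + mono u.ab * v.Q := rfl
@[simp] lemma one_ab : (1 : FoxData).ab = 0 := rfl
@[simp] lemma one_P : (1 : FoxData).P = 0 := rfl
@[simp] lemma one_Q : (1 : FoxData).Q = 0 := rfl
@[simp] lemma inv_ab (u : FoxData) : u⁻¹.ab = -u.ab := rfl
@[simp] lemma inv_P (u : FoxData) : u⁻¹.P = -(mono (-u.ab) * u.P) := rfl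
@[simp] lemma inv_Q (u : FoxData) : u⁻¹.Q = -(mono (-u.ab) * u.Q) := rfl

lemma FoxData.ext' {u v : FoxData} (h1 : u.ab = v.ab) (h2 : u.P = v.P) (h3 : u.Q = v.Q) :
    u = v := by cases u; cases v; simp_all

noncomputable instance : Group FoxData where
  mul_assoc u v w := FoxData.ext' (by simp [add_assoc]) (by simp [mono_add]; ring)
    (by simp [mono_add]; ring)
  one_mul u := FoxData.ext' (by simp) (by simp [mono_zero]) (by simp [mono_zero])
  mul_one u := FoxData.ext' (by simp) (by simp) (by simp)
  inv_mul_cancel u := FoxData.ext' (by simp) (by simp [← mono_add]) (by simp [← mono_add])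

/-- The homomorphism computing the lift of a loop to the universal abelian cover:
`(D g).P` and `(D g).Q` are the coefficients of the lifted 1-chain of `g`
(for `g ∈ [F₂,F₂]` this chain is a 1-cycle, the homology class of `g`). -/
noncomputable def D : F2 →* FoxData :=
  FreeGroup.lift fun b => if b then ⟨(1, 0), 1, 0⟩ else ⟨(0, 1), 0, 1⟩

/-- `φₖ(P) = f⁽ᵏ⁾(1)/k!` where `f(y) = P(1,y)`: in terms of coefficients,
`φₖ(P) = Σ_{(i,j)} C(j,k) · P_{(i,j)}` (generalized binomial coefficients). -/
noncomputable def phi (k : ℕ) (P : R2) : ℤ := P.coeff.sum fun a c => Ring.choose a.2 k * c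
/-- `ψₖ(Q) = g⁽ᵏ⁾(1)/k!` where `g(x) = Q(x,1)`. -/
noncomputable def psi (k : ℕ) (Q : R2) : ℤ := Q.coeff.sum fun a c => Ring.choose a.1 k * c

/-- Substitution `x = 1`, giving the one-variable Laurent polynomial `P(1,y)`. -/
noncomputable def subX1 (P : R2) : LaurentPolynomial ℤ :=
  P.coeff.sum fun a c => AddMonoidAlgebra.single a.2 c
/-- Substitution `y = 1`, giving the one-variable Laurent polynomial `Q(x,1)`. -/
noncomputable def subY1 (Q : R2) : LaurentPolynomial ℤ :=
  Q.coeff.sum fun a c => AddMonoidAlgebra.single a.1 c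

section Aux
noncomputable def cc : F2 := x * y * x⁻¹ * y⁻¹
lemma Dx : D x = ⟨(1,0),1,0⟩ := FreeGroup.lift_apply_of
lemma Dy : D y = ⟨(0,1),0,1⟩ := FreeGroup.lift_apply_of
lemma padd : ∀ a b c d : ℤ, ((a,b) : ℤ×ℤ) + (c,d) = (a+c, b+d) := fun _ _ _ _ => rfl
lemma pone : (1 : ℤ×ℤ) = (1,1) := rfl
lemma Dcc : D cc = ⟨0, 1 - Y, X - 1⟩ := by
  refine FoxData.ext' ?_ ?_ ?_ <;>
  simp [cc, map_mul, map_inv, Dx, Dy, X, Y, ← mono_add] <;>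
  · norm_num [sub_eq_add_neg, mono_zero, Prod.mk.injEq, Prod.mk_zero_zero]
end Aux
section Aux2
noncomputable def gg : F2 :=
  ((x*y)*cc*(x*y)⁻¹) * (x*cc*x⁻¹)⁻¹ * (y*cc*y⁻¹)⁻¹ * cc
lemma mono_pow (a : ℤ×ℤ) (n : ℕ) : mono a ^ n = mono (n • a) := by
  induction n with
  | zero => simp [mono_zero]
  | succ k ih => rw [pow_succ, ih, ← mono_add, add_smul, one_smul]
lemma mzero' : mono ((0:ℤ),(0:ℤ)) = 1 := rfl
lemma Dgg : D gg = ⟨0, -(X-1)*(Y-1)^2, (X-1)^2*(Y-1)⟩ := by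
  refine FoxData.ext' ?_ ?_ ?_ <;>
  simp only [gg, map_mul, map_inv, Dx, Dy, Dcc, mul_ab, mul_P, mul_Q, inv_ab, inv_P, inv_Q] <;>
  · ring_nf
    try simp only [X, Y, mono_pow, smul_eq_mul, ← mono_add, pone, padd, mono_zero, mzero']
    try norm_num [Prod.mk.injEq]
    try simp only [X, Y, mono_pow, smul_eq_mul, ← mono_add, pone, padd, mono_zero, mzero']
    try ring_nf
    try simp [mzero', mono_zero]
    try ring_nf
end Aux2

section Aux3
open AddMonoidAlgebra in
lemma S_eq (a : ℤ×ℤ) (c : ℤ) : (AddMonoidAlgebra.single a c : R2) = c • mono a := by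
  simp [mono, Finsupp.smul_single]

lemma Pexp : (-(X-1)*(Y-1)^2 : R2) =
    AddMonoidAlgebra.single ((0:ℤ),(0:ℤ)) 1 + AddMonoidAlgebra.single ((0:ℤ),(1:ℤ)) (-2)
    + AddMonoidAlgebra.single ((0:ℤ),(2:ℤ)) 1 + AddMonoidAlgebra.single ((1:ℤ),(0:ℤ)) (-1)
    + AddMonoidAlgebra.single ((1:ℤ),(1:ℤ)) 2 + AddMonoidAlgebra.single ((1:ℤ),(2:ℤ)) (-1) := by
  simp only [S_eq]
  ring_nf
  try simp only [X, Y, mono_pow, smul_eq_mul, ← mono_add, pone, padd, mono_zero, mzero']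
  try norm_num [Prod.mk.injEq]
  try simp only [X, Y, mono_pow, smul_eq_mul, ← mono_add, pone, padd, mono_zero, mzero']
  try ring_nf
  try simp [mzero', mono_zero]
  try ring_nf

lemma Qexp : ((X-1)^2*(Y-1) : R2) =
    AddMonoidAlgebra.single ((2:ℤ),(1:ℤ)) 1 + AddMonoidAlgebra.single ((2:ℤ),(0:ℤ)) (-1)
    + AddMonoidAlgebra.single ((1:ℤ),(1:ℤ)) (-2) + AddMonoidAlgebra.single ((1:ℤ),(0:ℤ)) 2
    + AddMonoidAlgebra.single ((0:ℤ),(1:ℤ)) 1 + AddMonoidAlgebra.single ((0:ℤ),(0:ℤ)) (-1) := by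
  simp only [S_eq]
  ring_nf
  try simp only [X, Y, mono_pow, smul_eq_mul, ← mono_add, pone, padd, mono_zero, mzero']
  try norm_num [Prod.mk.injEq]
  try simp only [X, Y, mono_pow, smul_eq_mul, ← mono_add, pone, padd, mono_zero, mzero']
  try ring_nf
  try simp [mzero', mono_zero]
  try ring_nf

lemma phi_add (k : ℕ) (P Q : R2) : phi k (P + Q) = phi k P + phi k Q :=
  Finsupp.sum_add_index' (fun a => mul_zero _) (fun a b₁ b₂ => mul_add _ _ _)
lemma phi_single (k : ℕ) (a : ℤ×ℤ) (c : ℤ) :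
    phi k (AddMonoidAlgebra.single a c) = Ring.choose a.2 k * c :=
  Finsupp.sum_single_index (mul_zero _)
lemma psi_add (k : ℕ) (P Q : R2) : psi k (P + Q) = psi k P + psi k Q :=
  Finsupp.sum_add_index' (fun a => mul_zero _) (fun a b₁ b₂ => mul_add _ _ _)
lemma psi_single (k : ℕ) (a : ℤ×ℤ) (c : ℤ) :
    psi k (AddMonoidAlgebra.single a c) = Ring.choose a.1 k * c :=
  Finsupp.sum_single_index (mul_zero _)
lemma subX1_add (P Q : R2) : subX1 (P + Q) = subX1 P + subX1 Q :=
  Finsupp.sum_add_index' (fun a => AddMonoidAlgebra.single_zero _) (fun a b₁ b₂ => AddMonoidAlgebra.single_add _ _ _)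
lemma subX1_single (a : ℤ×ℤ) (c : ℤ) :
    subX1 (AddMonoidAlgebra.single a c) = AddMonoidAlgebra.single a.2 c :=
  Finsupp.sum_single_index (AddMonoidAlgebra.single_zero _)
lemma subY1_add (P Q : R2) : subY1 (P + Q) = subY1 P + subY1 Q :=
  Finsupp.sum_add_index' (fun a => AddMonoidAlgebra.single_zero _) (fun a b₁ b₂ => AddMonoidAlgebra.single_add _ _ _)
lemma subY1_single (a : ℤ×ℤ) (c : ℤ) :
    subY1 (AddMonoidAlgebra.single a c) = AddMonoidAlgebra.single a.1 c :=
  Finsupp.sum_single_index (AddMonoidAlgebra.single_zero _)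

lemma gg_mem : gg ∈ commutator F2 := by
  have hcc : cc ∈ commutator F2 := by
    rw [commutator_def]
    exact Subgroup.commutator_mem_commutator (Subgroup.mem_top _) (Subgroup.mem_top _)
  have hn : (commutator F2).Normal := inferInstance
  exact mul_mem (mul_mem (mul_mem (hn.conj_mem _ hcc (x*y))
    (inv_mem (hn.conj_mem _ hcc x))) (inv_mem (hn.conj_mem _ hcc y))) hcc
end Aux3


/-- There is a `g ∈ [F₂,F₂]`, namely one whose homology class is `(x-1)(y-1)` times the
class of `⁅x,y⁆`, for which `P(1,y) = 0` and `Q(x,1) = 0` identically; hence all the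
homomorphisms `φⱼ` and `ψⱼ` vanish on `g`. -/
theorem exists_elt_with_all_phi_psi_vanishing :
    ∃ g : F2, g ∈ commutator F2 ∧
      (D g).P = -(X - 1) * (Y - 1) ^ 2 ∧ (D g).Q = (X - 1) ^ 2 * (Y - 1) ∧
      subX1 (D g).P = 0 ∧ subY1 (D g).Q = 0 ∧
      ∀ j : ℕ, phi j (D g).P = 0 ∧ psi j (D g).Q = 0 := by
  refine ⟨gg, gg_mem, by rw [Dgg], by rw [Dgg], ?_, ?_, ?_⟩
  · rw [Dgg]; show subX1 _ = 0
    rw [Pexp]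
    simp only [subX1_add, subX1_single]
    simp only [show ((-2:ℤ)) = -(2:ℤ) from rfl, show ((-1:ℤ)) = -(1:ℤ) from rfl, AddMonoidAlgebra.single_neg]
    abel
  · rw [Dgg]; show subY1 _ = 0
    rw [Qexp]
    simp only [subY1_add, subY1_single]
    simp only [show ((-2:ℤ)) = -(2:ℤ) from rfl, show ((-1:ℤ)) = -(1:ℤ) from rfl, AddMonoidAlgebra.single_neg]
    abel
  · intro j
    constructor
    · rw [Dgg]; show phi j _ = 0
      rw [Pexp]; simp only [phi_add, phi_single]; ring
    · rw [Dgg]; show psi j _ = 0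
      rw [Qexp]; simp only [psi_add, psi_single]; ring
end
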